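/- The function F(t) = t/(λ+t) - (t/(a(λ+t)²))·(1 - e^{-a(λ+t)}) for t > 0 (and 0 for t ≤ 0) is a cumulative distribution function: it is nondecreasing, right-continuous, tends to 0 as t → -∞ and to 1 as t → ∞. -/

import Mathlib

open Real Set Filter Topology

/-- CDF of the Exp-Min-U-Exp(a, λ) distribution. -/
noncomputable def expMinUExpCDF (a lam t : ℝ) : ℝ :=
  if t ≤ 0 then 0
  else t / (lam + t) - t / (a * (lam + t) ^ 2) * (1 - Real.exp (-a * (lam + t)))

noncomputable def emuG (a lam t : ℝ) : ℝ :=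
  t / (lam + t) - t / (a * (lam + t) ^ 2) * (1 - Real.exp (-a * (lam + t)))

noncomputable def emuD (a lam t : ℝ) : ℝ :=
  (a * lam * (lam + t) + t - lam
    + Real.exp (-a * (lam + t)) * (lam - t - a * t * (lam + t))) / (a * (lam + t) ^ 3)

lemma emuG_hasDerivAt (a lam t : ℝ) (ha : 0 < a) (hs : 0 < lam + t) :
    HasDerivAt (emuG a lam) (emuD a lam t) t := by
  have hs' : lam + t ≠ 0 := ne_of_gt hs
  have h1 : HasDerivAt (fun t : ℝ => lam + t) 1 t := by
    simpa using (hasDerivAt_id t).const_add lam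
  have h2 := (hasDerivAt_id t).div h1 hs'
  have h3 : HasDerivAt (fun t : ℝ => a * (lam + t) ^ 2) (a * (2 * (lam + t) ^ 1 * 1)) t :=
    (h1.pow 2).const_mul a
  have h4 := (hasDerivAt_id t).div h3 (by positivity)
  have h5 : HasDerivAt (fun t : ℝ => Real.exp (-a * (lam + t)))
      (Real.exp (-a * (lam + t)) * (-a * 1)) t := (h1.const_mul (-a)).exp
  have h6 := h5.const_sub 1
  have h7 := h4.mul h6
  have h8 := h2.sub h7
  refine h8.congr_deriv ?_
  simp only [Pi.div_apply, id]
  unfold emuD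
  field_simp
  ring

lemma emuN_nonneg (a lam t : ℝ) (ha : 0 < a) (hlam : 0 < lam) (ht : 0 ≤ t) :
    0 ≤ a * lam * (lam + t) + t - lam
      + Real.exp (-a * (lam + t)) * (lam - t - a * t * (lam + t)) := by
  set s := lam + t with hsdef
  have hs : 0 < s := by positivity
  set E := Real.exp (-a * s) with hEdef
  have hE0 : 0 < E := Real.exp_pos _
  have hE1 : 1 - a * s ≤ E := by
    have := Real.add_one_le_exp (-(a * s))
    rw [hEdef, neg_mul]; linarith [this]
  have hE2 : E * (1 + a * s) ≤ 1 := by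
    have h := Real.add_one_le_exp (a * s)
    have := mul_le_mul_of_nonneg_left h hE0.le
    calc E * (1 + a * s) = E * (a * s + 1) := by ring
      _ ≤ E * Real.exp (a * s) := this
      _ = 1 := by rw [hEdef, ← Real.exp_add]; simp
  rcases le_or_gt 0 (lam - t - a * t * s) with hB | hB
  · nlinarith [mul_nonneg (sub_nonneg.mpr hE1) hB,
      mul_nonneg (mul_nonneg (mul_nonneg ha.le hs.le) (mul_nonneg ha.le hs.le)) ht]
  · nlinarith [mul_nonneg (sub_nonneg.mpr hE2) (neg_nonneg.mpr hB.le),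
      mul_pos (mul_pos ha hs) (mul_pos ha hs), mul_pos hs (mul_pos ha hlam),
      mul_pos (mul_pos (mul_pos ha hs) (mul_pos ha hs)) hlam]

lemma emuD_nonneg (a lam t : ℝ) (ha : 0 < a) (hlam : 0 < lam) (ht : 0 ≤ t) :
    0 ≤ emuD a lam t := by
  unfold emuD
  apply div_nonneg (emuN_nonneg a lam t ha hlam ht)
  positivity

theorem expMinUExp_is_cdf (a lam : ℝ) (ha : 0 < a) (hlam : 0 < lam) :
    Monotone (expMinUExpCDF a lam) ∧
    (∀ t : ℝ, ContinuousWithinAt (expMinUExpCDF a lam) (Set.Ici t) t) ∧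
    Filter.Tendsto (expMinUExpCDF a lam) atBot (nhds 0) ∧
    Filter.Tendsto (expMinUExpCDF a lam) atTop (nhds 1) := by
  have hg0 : emuG a lam 0 = 0 := by simp [emuG]
  have hF : ∀ t : ℝ, 0 ≤ t → expMinUExpCDF a lam t = emuG a lam t := by
    intro t ht
    rcases eq_or_lt_of_le ht with h | h
    · rw [← h]; simp [expMinUExpCDF, hg0]
    · rw [expMinUExpCDF, if_neg (not_le.mpr h)]; rfl
  have hpos : ∀ t : ℝ, 0 ≤ t → 0 < lam + t := fun t ht => by positivity
  have hmono : MonotoneOn (emuG a lam) (Ici 0) := by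
    apply monotoneOn_of_deriv_nonneg (convex_Ici 0)
    · intro t ht
      exact (emuG_hasDerivAt a lam t ha (hpos t ht)).continuousAt.continuousWithinAt
    · rw [interior_Ici]
      intro t ht
      exact (emuG_hasDerivAt a lam t ha (hpos t (le_of_lt ht))).differentiableAt.differentiableWithinAt
    · rw [interior_Ici]
      intro t ht
      rw [(emuG_hasDerivAt a lam t ha (hpos t (le_of_lt ht))).deriv]
      exact emuD_nonneg a lam t ha hlam (le_of_lt ht)
  refine ⟨?_, ?_, ?_, ?_⟩
  · -- Monotone
    intro x y hxy
    by_cases hy : y ≤ 0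
    · rw [expMinUExpCDF, if_pos (hxy.trans hy), expMinUExpCDF, if_pos hy]
    · push_neg at hy
      rw [hF y hy.le]
      by_cases hx : x ≤ 0
      · rw [expMinUExpCDF, if_pos hx]
        rw [← hg0]
        exact hmono (self_mem_Ici) (mem_Ici.mpr hy.le) hy.le
      · push_neg at hx
        rw [hF x hx.le]
        exact hmono (mem_Ici.mpr hx.le) (mem_Ici.mpr (hx.le.trans hxy)) hxy
  · -- right continuity (in fact continuity)
    have hFmax : expMinUExpCDF a lam = fun t => emuG a lam (max t 0) := by
      funext t
      by_cases ht : t ≤ 0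
      · rw [expMinUExpCDF, if_pos ht, max_eq_right ht, hg0]
      · push_neg at ht
        rw [max_eq_left ht.le, hF t ht.le]
    intro t
    rw [hFmax]
    apply ContinuousAt.continuousWithinAt
    have h1 : ContinuousAt (emuG a lam) (max t 0) :=
      (emuG_hasDerivAt a lam (max t 0) ha (hpos _ (le_max_right t 0))).continuousAt
    have h2 : ContinuousAt (fun t : ℝ => max t 0) t :=
      (continuous_id.max continuous_const).continuousAt
    show ContinuousAt ((emuG a lam) ∘ fun s : ℝ => max s 0) t
    exact ContinuousAt.comp h1 h2
  · -- atBot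
    have heq : expMinUExpCDF a lam =ᶠ[atBot] fun _ => (0 : ℝ) := by
      filter_upwards [eventually_le_atBot (0 : ℝ)] with t ht
      rw [expMinUExpCDF, if_pos ht]
    exact Tendsto.congr' heq.symm tendsto_const_nhds
  · -- atTop
    have hA : Tendsto (fun t : ℝ => lam + t) atTop atTop :=
      tendsto_atTop_add_const_left _ lam tendsto_id
    have hne : ∀ᶠ t : ℝ in atTop, lam + t ≠ 0 := by
      filter_upwards [eventually_ge_atTop (0 : ℝ)] with t ht
      exact ne_of_gt (hpos t ht)
    have h1 : Tendsto (fun t : ℝ => t / (lam + t)) atTop (nhds 1) := by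
      have h0 : Tendsto (fun t : ℝ => lam / (lam + t)) atTop (nhds 0) :=
        Tendsto.div_atTop tendsto_const_nhds hA
      have := (tendsto_const_nhds : Tendsto (fun _ : ℝ => (1:ℝ)) atTop (nhds 1)).sub h0
      rw [sub_zero] at this
      apply Tendsto.congr' _ this
      filter_upwards [hne] with t ht
      field_simp
      ring
    have h2 : Tendsto (fun t : ℝ => t / (a * (lam + t) ^ 2)) atTop (nhds 0) := by
      have hB : Tendsto (fun t : ℝ => a * (lam + t)) atTop atTop :=
        Tendsto.const_mul_atTop ha hA
      have h0 : Tendsto (fun t : ℝ => 1 / (a * (lam + t))) atTop (nhds 0) :=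
        Tendsto.div_atTop tendsto_const_nhds hB
      have := h1.mul h0
      rw [mul_zero] at this
      apply Tendsto.congr' _ this
      filter_upwards [hne] with t ht
      rw [div_mul_div_comm, mul_one]
      ring_nf
    have h3 : Tendsto (fun t : ℝ => 1 - Real.exp (-a * (lam + t))) atTop (nhds 1) := by
      have hC : Tendsto (fun t : ℝ => -a * (lam + t)) atTop atBot := by
        exact Tendsto.const_mul_atTop_of_neg (neg_neg_iff_pos.mpr ha) hA
      have hE : Tendsto (fun t : ℝ => Real.exp (-a * (lam + t))) atTop (nhds 0) :=
        Real.tendsto_exp_atBot.comp hC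
      have := (tendsto_const_nhds : Tendsto (fun _ : ℝ => (1:ℝ)) atTop (nhds 1)).sub hE
      rwa [sub_zero] at this
    have hG : Tendsto (emuG a lam) atTop (nhds 1) := by
      have h4 := h1.sub (h2.mul h3)
      rw [show (1:ℝ) - 0 * 1 = 1 by norm_num] at h4
      unfold emuG
      exact h4
    apply Tendsto.congr' _ hG
    filter_upwards [eventually_ge_atTop (0 : ℝ)] with t ht
    exact (hF t ht).symm
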